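/- For every natural number n, every natural number q, and every nowhere-vanishing C^n complex-valued function u on an interval J, one has Σ_{p=0}^{n} C(n,p) · D^p(u^{p+q}) · D^{n-p}(u^{-p-q}) = Σ_{p=0}^{n} C(n,p) · D^p(u^p) · D^{n-p}(u^{-p}), i.e. Φ_{n,u}(u^q, u^{-q}) = Φ_{n,u}(1,1). -/

import Mathlib

open scoped Nat BigOperators

namespace Stmt1Aux


noncomputable def Phi (J : Set ℝ) (u : ℝ → ℂ) (n : ℕ) (f g : ℝ → ℂ) (t : ℝ) : ℂ :=
  ∑ p ∈ Finset.range (n+1), (n.choose p : ℂ) * iteratedDerivWithin p (u^p * f) J t *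
    iteratedDerivWithin (n-p) (u⁻¹^p * g) J t

noncomputable def Psi (J : Set ℝ) (u : ℝ → ℂ) (n : ℕ) (f g : ℝ → ℂ) (t : ℝ) : ℂ :=
  ∑ p ∈ Finset.range (n+1), (n.choose p : ℂ) * (p : ℂ) * iteratedDerivWithin p (u^p * f) J t *
    iteratedDerivWithin (n-p) (u⁻¹^p * g) J t

noncomputable def Th (J : Set ℝ) (u : ℝ → ℂ) : ℕ → (ℝ → ℂ) → ℝ → ℂ
  | 0, _, _ => 0
  | n+1, h, t => (n+1 : ℂ) * (Th J u n (derivWithin u J * u⁻¹ * h) t - Phi J u n h 1 t)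

variable {J : Set ℝ} {u w f g : ℝ → ℂ} {y t : ℝ}


lemma ncast_le {a b : ℕ} (h : a ≤ b) : (a : WithTop ℕ∞) ≤ (b : WithTop ℕ∞) := by
  exact_mod_cast h

lemma ncast_succ (a : ℕ) : ((a+1 : ℕ) : WithTop ℕ∞) = (a : WithTop ℕ∞) + 1 := by
  push_cast; ring

lemma one_le_ncast_succ (a : ℕ) : (1 : WithTop ℕ∞) ≤ ((a+1 : ℕ) : WithTop ℕ∞) := by
  exact_mod_cast Nat.one_le_iff_ne_zero.mpr (Nat.succ_ne_zero a)

lemma hasDW_pow (hw : DifferentiableWithinAt ℝ w J y) (s : ℕ) :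
    HasDerivWithinAt (w^(s+1)) (((s+1 : ℕ) : ℂ) * w y^s * derivWithin w J y) J y := by
  induction s with
  | zero => simpa using hw.hasDerivWithinAt
  | succ m ih =>
    have h := ih.mul hw.hasDerivWithinAt
    rw [show w^(m+1+1) = fun z => (w^(m+1)) z * w z from by funext z; simp [pow_succ]]
    refine h.congr_deriv ?_
    simp only [Pi.pow_apply]
    push_cast
    ring

lemma hasDW_inv (hu1 : DifferentiableWithinAt ℝ u J y) (h0 : u y ≠ 0) :
    HasDerivWithinAt u⁻¹ (-(derivWithin u J y) / (u y)^2) J y := by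
  have h := HasDerivAt.scomp_hasDerivWithinAt y (hasDerivAt_inv h0) hu1.hasDerivWithinAt
  rw [show u⁻¹ = (fun z : ℂ => z⁻¹) ∘ u from rfl]
  refine h.congr_deriv ?_
  rw [smul_eq_mul]
  field_simp

lemma key1 (hJ : UniqueDiffOn ℝ J) (ht : t ∈ J) (s : ℕ)
    (hu : ContDiffOn ℝ (s+1) u J) (hf : ContDiffOn ℝ (s+1) f J) :
    iteratedDerivWithin (s+1) (u^(s+1) * f) J t =
      iteratedDerivWithin s (u^s * derivWithin (u*f) J) J t +
      (s : ℂ) * iteratedDerivWithin s (u^s * (derivWithin u J * f)) J t := by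
  have h1 : (1 : WithTop ℕ∞) ≤ ((s+1 : ℕ) : WithTop ℕ∞) := one_le_ncast_succ s
  have hud : DifferentiableOn ℝ u J := hu.differentiableOn (by simp)
  have hfd : DifferentiableOn ℝ f J := hf.differentiableOn (by simp)
  have hE : Set.EqOn (derivWithin (u^(s+1) * f) J)
      (u^s * derivWithin (u*f) J + (s : ℂ) • (u^s * (derivWithin u J * f))) J := by
    intro y hy
    have hy' := hJ.uniqueDiffWithinAt hy
    have huf : HasDerivWithinAt (u*f) (derivWithin (u*f) J y) J y :=
      (((hud y hy).mul (hfd y hy)) : DifferentiableWithinAt ℝ (u*f) J y).hasDerivWithinAt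
    cases s with
    | zero =>
      simp only [zero_add, pow_one, pow_zero, Nat.cast_zero, zero_smul, add_zero, one_mul,
        Pi.add_apply, Pi.mul_apply, Pi.one_apply, Pi.smul_apply, smul_eq_mul, zero_mul,
        Pi.zero_apply]
    | succ m =>
      have hp := hasDW_pow (hud y hy) m
      have hmul := hp.mul huf
      rw [show u^(m+1+1) * f = fun z => (u^(m+1)) z * (u*f) z from by
            funext z; simp [pow_succ]; ring,
          show derivWithin (fun z => (u^(m+1)) z * (u*f) z) J y = _ from hmul.derivWithin hy']
      simp only [Pi.add_apply, Pi.smul_apply, Pi.mul_apply, Pi.pow_apply, smul_eq_mul]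
      push_cast
      ring
  have hus : ContDiffOn ℝ s u J := hu.of_le (ncast_le (Nat.le_succ s))
  have hfs : ContDiffOn ℝ s f J := hf.of_le (ncast_le (Nat.le_succ s))
  have hder : ContDiffOn ℝ s (derivWithin (u*f) J) J := by
    exact ContDiffOn.derivWithin (hu.mul hf) hJ le_rfl
  have hvf : ContDiffOn ℝ s (derivWithin u J * f) J := by
    exact ContDiffOn.mul (hu.derivWithin hJ le_rfl) hfs
  have hA : ContDiffOn ℝ s (u^s * derivWithin (u*f) J) J := (hus.pow s).mul hder
  have hC : ContDiffOn ℝ s (u^s * (derivWithin u J * f)) J := (hus.pow s).mul hvf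
  have hB : ContDiffOn ℝ s ((s : ℂ) • (u^s * (derivWithin u J * f))) J := by exact hC.const_smul ((s : ℂ))
  rw [iteratedDerivWithin_succ', iteratedDerivWithin_congr hE ht,
    iteratedDerivWithin_add ht hJ (hA t ht) (hB t ht),
    iteratedDerivWithin_const_smul ht hJ ((s : ℂ)) (hC t ht), smul_eq_mul]

lemma key2 (hJ : UniqueDiffOn ℝ J) (ht : t ∈ J) (k p : ℕ)
    (hu : ContDiffOn ℝ (k+1) u J) (hg : ContDiffOn ℝ (k+1) g J) (hu0 : ∀ x ∈ J, u x ≠ 0) :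
    iteratedDerivWithin (k+1) (u⁻¹^p * g) J t =
      iteratedDerivWithin k (u⁻¹^p * derivWithin g J) J t -
      (p : ℂ) * iteratedDerivWithin k (u⁻¹^p * (derivWithin u J * u⁻¹ * g)) J t := by
  have h1 : (1 : WithTop ℕ∞) ≤ ((k+1 : ℕ) : WithTop ℕ∞) := one_le_ncast_succ k
  have hui : ContDiffOn ℝ (k+1) u⁻¹ J := hu.inv hu0
  have hud : DifferentiableOn ℝ u J := hu.differentiableOn (by simp)
  have huid : DifferentiableOn ℝ u⁻¹ J := hui.differentiableOn (by simp)
  have hgd : DifferentiableOn ℝ g J := hg.differentiableOn (by simp)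
  have hE : Set.EqOn (derivWithin (u⁻¹^p * g) J)
      (u⁻¹^p * derivWithin g J + (-(p : ℂ)) • (u⁻¹^p * (derivWithin u J * u⁻¹ * g))) J := by
    intro y hy
    have hy' := hJ.uniqueDiffWithinAt hy
    have hgy : HasDerivWithinAt g (derivWithin g J y) J y := (hgd y hy).hasDerivWithinAt
    cases p with
    | zero =>
      simp only [pow_zero, Nat.cast_zero, neg_zero, zero_smul, add_zero]
      rw [show (1 : ℝ → ℂ) * g = g from one_mul _,
          show (1 : ℝ → ℂ) * derivWithin g J = derivWithin g J from one_mul _]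
    | succ m =>
      have hp := hasDW_pow (huid y hy) m
      have hmul := hp.mul hgy
      have hinvd : derivWithin u⁻¹ J y = -(derivWithin u J y) / (u y)^2 :=
        (hasDW_inv (hud y hy) (hu0 y hy)).derivWithin hy'
      rw [show u⁻¹^(m+1) * g = fun z => (u⁻¹^(m+1)) z * g z from rfl,
          show derivWithin (fun z => (u⁻¹^(m+1)) z * g z) J y = _ from hmul.derivWithin hy', hinvd]
      simp only [Pi.add_apply, Pi.smul_apply, Pi.mul_apply, Pi.pow_apply, Pi.inv_apply,
        smul_eq_mul]
      have h0 := hu0 y hy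
      field_simp
      ring_nf
      field_simp
  have hus : ContDiffOn ℝ k u⁻¹ J := hui.of_le (ncast_le (Nat.le_succ k))
  have hgs : ContDiffOn ℝ k g J := hg.of_le (ncast_le (Nat.le_succ k))
  have hder : ContDiffOn ℝ k (derivWithin g J) J := hg.derivWithin hJ le_rfl
  have hv : ContDiffOn ℝ k (derivWithin u J) J := hu.derivWithin hJ le_rfl
  have hA : ContDiffOn ℝ k (u⁻¹^p * derivWithin g J) J := (hus.pow p).mul hder
  have hC : ContDiffOn ℝ k (u⁻¹^p * (derivWithin u J * u⁻¹ * g)) J :=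
    (hus.pow p).mul ((hv.mul hus).mul hgs)
  have hB : ContDiffOn ℝ k ((-(p : ℂ)) • (u⁻¹^p * (derivWithin u J * u⁻¹ * g))) J :=
    by exact hC.const_smul (-(p : ℂ))
  rw [iteratedDerivWithin_succ', iteratedDerivWithin_congr hE ht,
    iteratedDerivWithin_add ht hJ (hA t ht) (hB t ht),
    iteratedDerivWithin_const_smul ht hJ (-(p : ℂ)) (hC t ht), smul_eq_mul]
  ring



lemma Psi_zero (f g : ℝ → ℂ) (t : ℝ) : Psi J u 0 f g t = 0 := by simp [Psi]

lemma Phi_congr (hJ : UniqueDiffOn ℝ J) {f₁ f₂ g₁ g₂ : ℝ → ℂ} (hf : Set.EqOn f₁ f₂ J)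
    (hg : Set.EqOn g₁ g₂ J) (n : ℕ) {t : ℝ} (ht : t ∈ J) :
    Phi J u n f₁ g₁ t = Phi J u n f₂ g₂ t := by
  unfold Phi
  refine Finset.sum_congr rfl fun p _ => ?_
  have e1 : Set.EqOn (u^p * f₁) (u^p * f₂) J := fun y hy => by
    simp only [Pi.mul_apply]; rw [hf hy]
  have e2 : Set.EqOn (u⁻¹^p * g₁) (u⁻¹^p * g₂) J := fun y hy => by
    simp only [Pi.mul_apply]; rw [hg hy]
  rw [iteratedDerivWithin_congr e1 ht, iteratedDerivWithin_congr e2 ht]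

lemma Psi_congr (hJ : UniqueDiffOn ℝ J) {f₁ f₂ g₁ g₂ : ℝ → ℂ} (hf : Set.EqOn f₁ f₂ J)
    (hg : Set.EqOn g₁ g₂ J) (n : ℕ) {t : ℝ} (ht : t ∈ J) :
    Psi J u n f₁ g₁ t = Psi J u n f₂ g₂ t := by
  unfold Psi
  refine Finset.sum_congr rfl fun p _ => ?_
  have e1 : Set.EqOn (u^p * f₁) (u^p * f₂) J := fun y hy => by
    simp only [Pi.mul_apply]; rw [hf hy]
  have e2 : Set.EqOn (u⁻¹^p * g₁) (u⁻¹^p * g₂) J := fun y hy => by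
    simp only [Pi.mul_apply]; rw [hg hy]
  rw [iteratedDerivWithin_congr e1 ht, iteratedDerivWithin_congr e2 ht]

lemma Phi_add_left (hJ : UniqueDiffOn ℝ J) {n : ℕ} (hu : ContDiffOn ℝ n u J)
    {a b : ℝ → ℂ} (ha : ContDiffOn ℝ n a J) (hb : ContDiffOn ℝ n b J) (g : ℝ → ℂ)
    {t : ℝ} (ht : t ∈ J) :
    Phi J u n (a + b) g t = Phi J u n a g t + Phi J u n b g t := by
  unfold Phi
  rw [← Finset.sum_add_distrib]
  refine Finset.sum_congr rfl fun p hp => ?_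
  have hp' : p ≤ n := Nat.lt_succ_iff.mp (Finset.mem_range.mp hp)
  have h1 : ContDiffOn ℝ p (u^p * a) J :=
    (((hu.pow p).mul ha).of_le (ncast_le hp') : )
  have h2 : ContDiffOn ℝ p (u^p * b) J :=
    (((hu.pow p).mul hb).of_le (ncast_le hp') : )
  have : u^p * (a+b) = u^p * a + u^p * b := mul_add _ _ _
  rw [this, iteratedDerivWithin_add ht hJ (h1 t ht) (h2 t ht)]
  ring

lemma sumA (hJ : UniqueDiffOn ℝ J) (hu0 : ∀ x ∈ J, u x ≠ 0) (n : ℕ)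
    (hu : ContDiffOn ℝ (n+1) u J) (hg : ContDiffOn ℝ (n+1) g J) (ht : t ∈ J) :
    (∑ p ∈ Finset.range (n+1+1), (n.choose p : ℂ) *
        iteratedDerivWithin p (u^p * f) J t *
        iteratedDerivWithin (n+1-p) (u⁻¹^p * g) J t) =
      Phi J u n f (derivWithin g J) t -
      Psi J u n f (derivWithin u J * u⁻¹ * g) t := by
  rw [Finset.sum_range_succ]
  have hz : (n.choose (n+1) : ℂ) = 0 := by
    simp [Nat.choose_succ_self]
  rw [hz]
  simp only [zero_mul, add_zero]
  have hstep : ∀ p ∈ Finset.range (n+1),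
      (n.choose p : ℂ) * iteratedDerivWithin p (u^p * f) J t *
        iteratedDerivWithin (n+1-p) (u⁻¹^p * g) J t =
      (n.choose p : ℂ) * iteratedDerivWithin p (u^p * f) J t *
        iteratedDerivWithin (n-p) (u⁻¹^p * derivWithin g J) J t -
      (n.choose p : ℂ) * (p : ℂ) * iteratedDerivWithin p (u^p * f) J t *
        iteratedDerivWithin (n-p) (u⁻¹^p * (derivWithin u J * u⁻¹ * g)) J t := by
    intro p hp
    have hp' : p ≤ n := Nat.lt_succ_iff.mp (Finset.mem_range.mp hp)
    have hsub : n+1-p = (n-p)+1 := by omega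
    have hle : ((n-p : ℕ) : WithTop ℕ∞) + 1 ≤ ((n : ℕ) : WithTop ℕ∞) + 1 :=
      add_le_add_left (ncast_le (Nat.sub_le n p)) 1
    have hcd : ContDiffOn ℝ ((n-p)+1) u J := hu.of_le hle
    have hcg : ContDiffOn ℝ ((n-p)+1) g J := hg.of_le hle
    rw [hsub, key2 hJ ht (n-p) p hcd hcg hu0]
    ring
  rw [Finset.sum_congr rfl hstep, Finset.sum_sub_distrib]
  rfl

lemma sumB (hJ : UniqueDiffOn ℝ J) (n : ℕ)
    (hu : ContDiffOn ℝ (n+1) u J) (hf : ContDiffOn ℝ (n+1) f J) (ht : t ∈ J) :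
    (∑ i ∈ Finset.range (n+1), (n.choose i : ℂ) *
        iteratedDerivWithin (i+1) (u^(i+1) * f) J t *
        iteratedDerivWithin (n-i) (u⁻¹^(i+1) * g) J t) =
      Phi J u n (derivWithin (u*f) J) (u⁻¹ * g) t +
      Psi J u n (derivWithin u J * f) (u⁻¹ * g) t := by
  have hstep : ∀ i ∈ Finset.range (n+1),
      (n.choose i : ℂ) * iteratedDerivWithin (i+1) (u^(i+1) * f) J t *
        iteratedDerivWithin (n-i) (u⁻¹^(i+1) * g) J t =
      (n.choose i : ℂ) * iteratedDerivWithin i (u^i * derivWithin (u*f) J) J t *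
        iteratedDerivWithin (n-i) (u⁻¹^i * (u⁻¹ * g)) J t +
      (n.choose i : ℂ) * (i : ℂ) * iteratedDerivWithin i (u^i * (derivWithin u J * f)) J t *
        iteratedDerivWithin (n-i) (u⁻¹^i * (u⁻¹ * g)) J t := by
    intro i hi
    have hi' : i ≤ n := Nat.lt_succ_iff.mp (Finset.mem_range.mp hi)
    have hle : ((i : ℕ) : WithTop ℕ∞) + 1 ≤ ((n : ℕ) : WithTop ℕ∞) + 1 :=
      add_le_add_left (ncast_le hi') 1
    have hcd : ContDiffOn ℝ (i+1) u J := hu.of_le hle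
    have hcf : ContDiffOn ℝ (i+1) f J := hf.of_le hle
    rw [key1 hJ ht i hcd hcf,
      show u⁻¹^(i+1) * g = u⁻¹^i * (u⁻¹ * g) from by rw [pow_succ, mul_assoc]]
    ring
  rw [Finset.sum_congr rfl hstep, Finset.sum_add_distrib]
  rfl

lemma PsiRec (hJ : UniqueDiffOn ℝ J) (n : ℕ)
    (hu : ContDiffOn ℝ (n+1) u J) (hf : ContDiffOn ℝ (n+1) f J) (ht : t ∈ J) :
    Psi J u (n+1) f g t = ((n : ℂ)+1) *
      (Phi J u n (derivWithin (u*f) J) (u⁻¹ * g) t +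
       Psi J u n (derivWithin u J * f) (u⁻¹ * g) t) := by
  rw [show Psi J u (n+1) f g t = ∑ p ∈ Finset.range (n+1+1), ((n+1).choose p : ℂ) * (p : ℂ) *
      iteratedDerivWithin p (u^p * f) J t *
      iteratedDerivWithin (n+1-p) (u⁻¹^p * g) J t from rfl,
    Finset.sum_range_succ']
  simp only [Nat.cast_zero, mul_zero, zero_mul, add_zero]
  have hstep : ∀ i ∈ Finset.range (n+1),
      ((n+1).choose (i+1) : ℂ) * ((i+1 : ℕ) : ℂ) *
        iteratedDerivWithin (i+1) (u^(i+1) * f) J t *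
        iteratedDerivWithin (n+1-(i+1)) (u⁻¹^(i+1) * g) J t =
      ((n : ℂ)+1) *
        ((n.choose i : ℂ) * iteratedDerivWithin i (u^i * derivWithin (u*f) J) J t *
          iteratedDerivWithin (n-i) (u⁻¹^i * (u⁻¹ * g)) J t +
         (n.choose i : ℂ) * (i : ℂ) *
          iteratedDerivWithin i (u^i * (derivWithin u J * f)) J t *
          iteratedDerivWithin (n-i) (u⁻¹^i * (u⁻¹ * g)) J t) := by
    intro i hi
    have hi' : i ≤ n := Nat.lt_succ_iff.mp (Finset.mem_range.mp hi)
    have hle : ((i : ℕ) : WithTop ℕ∞) + 1 ≤ ((n : ℕ) : WithTop ℕ∞) + 1 :=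
      add_le_add_left (ncast_le hi') 1
    have hcd : ContDiffOn ℝ (i+1) u J := hu.of_le hle
    have hcf : ContDiffOn ℝ (i+1) f J := hf.of_le hle
    have hnat : (n+1).choose (i+1) * (i+1) = (n+1) * n.choose i :=
      (Nat.add_one_mul_choose_eq n i).symm
    have hco : (((n+1).choose (i+1) : ℕ) : ℂ) * ((i+1 : ℕ) : ℂ) =
        (((n+1 : ℕ)) : ℂ) * ((n.choose i : ℕ) : ℂ) := by exact_mod_cast hnat
    rw [show n+1-(i+1) = n-i from by omega, key1 hJ ht i hcd hcf,
      show u⁻¹^(i+1) * g = u⁻¹^i * (u⁻¹ * g) from by rw [pow_succ, mul_assoc], hco]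
    push_cast
    ring
  rw [Finset.sum_congr rfl hstep, ← Finset.mul_sum, Finset.sum_add_distrib]
  rfl

lemma PhiRec (hJ : UniqueDiffOn ℝ J) (hu0 : ∀ x ∈ J, u x ≠ 0) (n : ℕ)
    (hu : ContDiffOn ℝ (n+1) u J) (hf : ContDiffOn ℝ (n+1) f J)
    (hg : ContDiffOn ℝ (n+1) g J) (ht : t ∈ J) :
    Phi J u (n+1) f g t =
      Phi J u n f (derivWithin g J) t +
      Phi J u n (derivWithin (u*f) J) (u⁻¹ * g) t +
      Psi J u n (derivWithin u J * f) (u⁻¹ * g) t -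
      Psi J u n f (derivWithin u J * u⁻¹ * g) t := by
  have hA := sumA (f := f) hJ hu0 n hu hg ht
  have hB := sumB (g := g) hJ n hu hf ht
  have hre : (∑ p ∈ Finset.range (n+1+1), (n.choose p : ℂ) *
        iteratedDerivWithin p (u^p * f) J t *
        iteratedDerivWithin (n+1-p) (u⁻¹^p * g) J t) =
      (∑ i ∈ Finset.range (n+1), (n.choose (i+1) : ℂ) *
        iteratedDerivWithin (i+1) (u^(i+1) * f) J t *
        iteratedDerivWithin (n+1-(i+1)) (u⁻¹^(i+1) * g) J t) +
      (n.choose 0 : ℂ) * iteratedDerivWithin 0 (u^0 * f) J t *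
        iteratedDerivWithin (n+1-0) (u⁻¹^0 * g) J t :=
    Finset.sum_range_succ' _ _
  rw [show Phi J u (n+1) f g t = ∑ p ∈ Finset.range (n+1+1), ((n+1).choose p : ℂ) *
      iteratedDerivWithin p (u^p * f) J t *
      iteratedDerivWithin (n+1-p) (u⁻¹^p * g) J t from rfl,
    Finset.sum_range_succ']
  have hstep : ∀ i ∈ Finset.range (n+1),
      ((n+1).choose (i+1) : ℂ) * iteratedDerivWithin (i+1) (u^(i+1) * f) J t *
        iteratedDerivWithin (n+1-(i+1)) (u⁻¹^(i+1) * g) J t =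
      (n.choose (i+1) : ℂ) * iteratedDerivWithin (i+1) (u^(i+1) * f) J t *
        iteratedDerivWithin (n+1-(i+1)) (u⁻¹^(i+1) * g) J t +
      (n.choose i : ℂ) * iteratedDerivWithin (i+1) (u^(i+1) * f) J t *
        iteratedDerivWithin (n-i) (u⁻¹^(i+1) * g) J t := by
    intro i hi
    rw [Nat.choose_succ_succ n i, show n+1-(i+1) = n-i from by omega]
    push_cast
    ring
  rw [Finset.sum_congr rfl hstep, Finset.sum_add_distrib]
  simp only [Nat.choose_zero_right, Nat.cast_one, one_mul] at hre ⊢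
  linear_combination hA + hB - hre

lemma Th_congr (hJ : UniqueDiffOn ℝ J) :
    ∀ (n : ℕ) {h₁ h₂ : ℝ → ℂ}, Set.EqOn h₁ h₂ J → ∀ {t : ℝ}, t ∈ J →
      Th J u n h₁ t = Th J u n h₂ t := by
  intro n
  induction n with
  | zero => intro h₁ h₂ _ t _; rfl
  | succ m ih =>
    intro h₁ h₂ hE t ht
    simp only [Th]
    have hE2 : Set.EqOn (derivWithin u J * u⁻¹ * h₁) (derivWithin u J * u⁻¹ * h₂) J :=
      fun y hy => by simp only [Pi.mul_apply]; rw [hE hy]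
    rw [ih hE2 ht, Phi_congr hJ hE (fun y _ => rfl) m ht]

lemma Phi_zero (hJ : UniqueDiffOn ℝ J) (m : ℕ) {t : ℝ} (ht : t ∈ J) {a : ℝ → ℂ}
    (ha : Set.EqOn a 0 J) : Phi J u m a 1 t = 0 := by
  unfold Phi
  refine Finset.sum_eq_zero fun p _ => ?_
  have hE : Set.EqOn (u^p * a) ((0:ℂ) • (1 : ℝ → ℂ)) J := fun y hy => by
    simp only [Pi.mul_apply, Pi.smul_apply, Pi.one_apply, smul_eq_mul, mul_one]
    rw [ha hy]
    simp
  have hone : ContDiffOn ℝ p (1 : ℝ → ℂ) J := by exact contDiffOn_const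
  rw [iteratedDerivWithin_congr hE ht,
    iteratedDerivWithin_const_smul ht hJ (0:ℂ) (hone t ht)]
  simp

lemma Th_add (hJ : UniqueDiffOn ℝ J) (hu0 : ∀ x ∈ J, u x ≠ 0) :
    ∀ (n : ℕ), ContDiffOn ℝ n u J → ∀ {a b : ℝ → ℂ},
      ContDiffOn ℝ (n-1 : ℕ) a J → ContDiffOn ℝ (n-1 : ℕ) b J → ∀ {t : ℝ}, t ∈ J →
      Th J u n (a + b) t = Th J u n a t + Th J u n b t := by
  intro n
  induction n with
  | zero => intro _ a b _ _ t _; simp [Th]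
  | succ m ih =>
    intro hu a b ha hb t ht
    have ha' : ContDiffOn ℝ m a J := by simpa using ha
    have hb' : ContDiffOn ℝ m b J := by simpa using hb
    have hum : ContDiffOn ℝ m u J := hu.of_le (ncast_le (Nat.le_succ m))
    have hu1 : ContDiffOn ℝ ((m : WithTop ℕ∞) + 1) u J := by
      rw [← ncast_succ]; exact hu
    have hv : ContDiffOn ℝ m (derivWithin u J) J := hu1.derivWithin hJ le_rfl
    have hui : ContDiffOn ℝ m u⁻¹ J := hum.inv hu0
    simp only [Th]
    have hmul : derivWithin u J * u⁻¹ * (a + b) =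
        derivWithin u J * u⁻¹ * a + derivWithin u J * u⁻¹ * b := mul_add _ _ _
    have hsm : ∀ c : ℝ → ℂ, ContDiffOn ℝ (m-1 : ℕ) c J → 
        ContDiffOn ℝ (m-1 : ℕ) (derivWithin u J * u⁻¹ * c) J := fun c hc =>
      ((hv.of_le (ncast_le (Nat.sub_le m 1))).mul
        (hui.of_le (ncast_le (Nat.sub_le m 1)))).mul hc
    rw [hmul, ih hum (hsm a (ha'.of_le (ncast_le (Nat.sub_le m 1))))
        (hsm b (hb'.of_le (ncast_le (Nat.sub_le m 1)))) ht,
      Phi_add_left hJ hum ha' hb' 1 ht]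
    ring

lemma Th_split (hJ : UniqueDiffOn ℝ J) (hu0 : ∀ x ∈ J, u x ≠ 0) (m : ℕ)
    (hu1 : ContDiffOn ℝ ((m : WithTop ℕ∞) + 1) u J)
    (hf : ContDiffOn ℝ m f J) (hg : ContDiffOn ℝ m g J) {t : ℝ} (ht : t ∈ J) :
    Th J u m (f * derivWithin (derivWithin u J * u⁻¹ * g) J) t =
      Th J u m (f * (derivWithin (derivWithin u J) J * u⁻¹ * g)) t +
      Th J u m (derivWithin u J * f * derivWithin (u⁻¹ * g) J) t := by
  cases m with
  | zero => simp [Th]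
  | succ k =>
    have hone : (1 : WithTop ℕ∞) ≤ ((k+1 : ℕ) : WithTop ℕ∞) := one_le_ncast_succ k
    have hu' : ContDiffOn ℝ (k+1) u J := hu1.of_le le_self_add
    have hv : ContDiffOn ℝ ((k : WithTop ℕ∞) + 1) (derivWithin u J) J := by
      refine hu1.derivWithin hJ ?_
      rw [← ncast_succ]
    have hvd : DifferentiableOn ℝ (derivWithin u J) J := by
      refine hv.differentiableOn ?_
      rw [← ncast_succ]
      exact_mod_cast Nat.succ_ne_zero k
    have hui : ContDiffOn ℝ (k+1) u⁻¹ J := hu'.inv hu0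
    have huigd : DifferentiableOn ℝ (u⁻¹ * g) J := (hui.mul hg).differentiableOn (by simp)
    have hE : Set.EqOn (f * derivWithin (derivWithin u J * u⁻¹ * g) J)
        (f * (derivWithin (derivWithin u J) J * u⁻¹ * g) +
         derivWithin u J * f * derivWithin (u⁻¹ * g) J) J := by
      intro y hy
      have hy' := hJ.uniqueDiffWithinAt hy
      have hd : derivWithin (derivWithin u J * u⁻¹ * g) J y =
          derivWithin (derivWithin u J) J y * (u⁻¹ * g) y +
          derivWithin u J y * derivWithin (u⁻¹ * g) J y := by
        rw [show derivWithin u J * u⁻¹ * g = derivWithin u J * (u⁻¹ * g) from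
          mul_assoc _ _ _]
        exact derivWithin_mul (hvd y hy) (huigd y hy)
      simp only [Pi.mul_apply, Pi.add_apply, Pi.inv_apply, hd]
      ring
    have hc1 : ContDiffOn ℝ (k+1-1 : ℕ) (f * (derivWithin (derivWithin u J) J * u⁻¹ * g)) J := by
      have hvp : ContDiffOn ℝ k (derivWithin (derivWithin u J) J) J := hv.derivWithin hJ le_rfl
      have := (hf.of_le (ncast_le (Nat.le_succ k))).mul
        ((hvp.mul (hui.of_le (ncast_le (Nat.le_succ k)))).mul (hg.of_le (ncast_le (Nat.le_succ k))))
      rw [Nat.add_sub_cancel]; exact this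
    have hc2 : ContDiffOn ℝ (k+1-1 : ℕ) (derivWithin u J * f * derivWithin (u⁻¹ * g) J) J := by
      have hd2 : ContDiffOn ℝ k (derivWithin (u⁻¹ * g) J) J :=
        (hui.mul (hg.of_le (by rw [← ncast_succ]))).derivWithin hJ le_rfl
      have := ((hv.of_le le_self_add).mul (hf.of_le (ncast_le (Nat.le_succ k)))).mul hd2
      rw [Nat.add_sub_cancel]; exact this
    rw [Th_congr hJ (k+1) hE ht, Th_add hJ hu0 (k+1) hu' hc1 hc2 ht]

lemma Th_split2 (hJ : UniqueDiffOn ℝ J) (hu0 : ∀ x ∈ J, u x ≠ 0) (m : ℕ)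
    (hu1 : ContDiffOn ℝ ((m : WithTop ℕ∞) + 1) u J)
    (hf : ContDiffOn ℝ ((m : WithTop ℕ∞) + 1) f J)
    (hg : ContDiffOn ℝ ((m : WithTop ℕ∞) + 1) g J) {t : ℝ} (ht : t ∈ J) :
    Th J u m (derivWithin u J * f * derivWithin (u⁻¹ * g) J) t =
      Th J u m (derivWithin u J * (f * g) * derivWithin (u⁻¹ * (1 : ℝ → ℂ)) J) t +
      Th J u m (derivWithin u J * u⁻¹ * (f * derivWithin g J)) t := by
  have h1 : (1 : WithTop ℕ∞) ≤ (m : WithTop ℕ∞) + 1 := le_add_self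
  have hui : ContDiffOn ℝ ((m : WithTop ℕ∞) + 1) u⁻¹ J := hu1.inv hu0
  have huid : DifferentiableOn ℝ u⁻¹ J := hui.differentiableOn (by simp)
  have hgd : DifferentiableOn ℝ g J := hg.differentiableOn (by simp)
  have hv : ContDiffOn ℝ m (derivWithin u J) J := hu1.derivWithin hJ le_rfl
  have hE : Set.EqOn (derivWithin u J * f * derivWithin (u⁻¹ * g) J)
      (derivWithin u J * (f * g) * derivWithin (u⁻¹ * (1 : ℝ → ℂ)) J +
       derivWithin u J * u⁻¹ * (f * derivWithin g J)) J := by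
    intro y hy
    have hy' := hJ.uniqueDiffWithinAt hy
    have hd : derivWithin (u⁻¹ * g) J y =
        derivWithin u⁻¹ J y * g y + u⁻¹ y * derivWithin g J y :=
      derivWithin_mul (huid y hy) (hgd y hy)
    have hd1 : derivWithin (u⁻¹ * (1 : ℝ → ℂ)) J y = derivWithin u⁻¹ J y := by
      rw [mul_one]
    simp only [Pi.mul_apply, Pi.add_apply, Pi.inv_apply, hd, hd1]
    ring
  have hsub : ∀ {a b : ℕ}, a ≤ b → ((a:ℕ) : WithTop ℕ∞) ≤ ((b:ℕ) : WithTop ℕ∞) := fun h => ncast_le h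
  have hm : ContDiffOn ℝ m u J := hu1.of_le le_self_add
  have hc1 : ContDiffOn ℝ (m-1 : ℕ) (derivWithin u J * (f * g) *
      derivWithin (u⁻¹ * (1 : ℝ → ℂ)) J) J := by
    have hone : ContDiffOn ℝ ((m : WithTop ℕ∞) + 1) (1 : ℝ → ℂ) J := by exact contDiffOn_const
    have hd2 : ContDiffOn ℝ m (derivWithin (u⁻¹ * (1 : ℝ → ℂ)) J) J :=
      (hui.mul hone).derivWithin hJ le_rfl
    exact ((hv.mul ((hf.of_le le_self_add).mul (hg.of_le le_self_add))).mul hd2).of_le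
      (ncast_le (Nat.sub_le m 1))
  have hc2 : ContDiffOn ℝ (m-1 : ℕ) (derivWithin u J * u⁻¹ * (f * derivWithin g J)) J := by
    have hd2 : ContDiffOn ℝ m (derivWithin g J) J := hg.derivWithin hJ le_rfl
    exact ((hv.mul (hui.of_le le_self_add)).mul ((hf.of_le le_self_add).mul hd2)).of_le
      (ncast_le (Nat.sub_le m 1))
  rw [Th_congr hJ m hE ht, Th_add hJ hu0 m hm hc1 hc2 ht]

lemma PhiMulSplit (hJ : UniqueDiffOn ℝ J) (hu0 : ∀ x ∈ J, u x ≠ 0) (m : ℕ)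
    (hu1 : ContDiffOn ℝ ((m : WithTop ℕ∞) + 1) u J)
    (hf1 : ContDiffOn ℝ ((m : WithTop ℕ∞) + 1) f J)
    (hg1 : ContDiffOn ℝ ((m : WithTop ℕ∞) + 1) g J) {t : ℝ} (ht : t ∈ J) :
    Phi J u m (derivWithin (u * (f * g)) J * (u⁻¹ * (1 : ℝ → ℂ))) 1 t =
      Phi J u m (derivWithin (u * f) J * (u⁻¹ * g)) 1 t +
      Phi J u m (f * derivWithin g J) 1 t := by
  have h1 : (1 : WithTop ℕ∞) ≤ (m : WithTop ℕ∞) + 1 := le_add_self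
  have hEq : Set.EqOn (derivWithin (u * (f * g)) J * (u⁻¹ * (1 : ℝ → ℂ)))
      (derivWithin (u * f) J * (u⁻¹ * g) + f * derivWithin g J) J := by
    intro y hy
    have hy' := hJ.uniqueDiffWithinAt hy
    have hd : derivWithin (u * (f * g)) J y =
        derivWithin (u * f) J y * g y + (u * f) y * derivWithin g J y := by
      rw [show u * (f * g) = (u * f) * g from (mul_assoc u f g).symm]
      exact derivWithin_mul (((hu1.mul hf1).differentiableOn (by simp)) y hy)
        ((hg1.differentiableOn (by simp)) y hy)
    simp only [Pi.mul_apply, Pi.add_apply, Pi.inv_apply, Pi.one_apply, hd]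
    have h0 := hu0 y hy
    field_simp
  have hm : ContDiffOn ℝ m u J := hu1.of_le le_self_add
  have ha : ContDiffOn ℝ m (derivWithin (u * f) J * (u⁻¹ * g)) J :=
    ((hu1.mul hf1).derivWithin hJ le_rfl).mul
      ((hm.inv hu0).mul (hg1.of_le le_self_add))
  have hb : ContDiffOn ℝ m (f * derivWithin g J) J :=
    (hf1.of_le le_self_add).mul (hg1.derivWithin hJ le_rfl)
  rw [Phi_congr hJ hEq (fun y _ => rfl) m ht, Phi_add_left hJ hm ha hb 1 ht]

lemma mainInd (hJ : UniqueDiffOn ℝ J) (hu0 : ∀ x ∈ J, u x ≠ 0) :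
    ∀ (n : ℕ), ContDiffOn ℝ n u J → ∀ (f g : ℝ → ℂ),
      ContDiffOn ℝ n f J → ContDiffOn ℝ n g J → ∀ {t : ℝ}, t ∈ J →
      (Phi J u n f g t = Phi J u n (f * g) 1 t ∧
       Psi J u n f g t = Psi J u n (f * g) 1 t + Th J u n (f * derivWithin g J) t) := by
  intro n
  induction n with
  | zero =>
    intro _ f g _ _ t _
    constructor
    · simp [Phi, iteratedDerivWithin_zero]
    · simp [Psi, Th]
  | succ m ih =>
    intro hu f g hf hg t ht
    have hu1 : ContDiffOn ℝ ((m : WithTop ℕ∞) + 1) u J := by rw [← ncast_succ]; exact hu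
    have hf1 : ContDiffOn ℝ ((m : WithTop ℕ∞) + 1) f J := by rw [← ncast_succ]; exact hf
    have hg1 : ContDiffOn ℝ ((m : WithTop ℕ∞) + 1) g J := by rw [← ncast_succ]; exact hg
    have hone1 : ContDiffOn ℝ ((m : WithTop ℕ∞) + 1) (1 : ℝ → ℂ) J := by exact contDiffOn_const
    have hone_m : ContDiffOn ℝ m (1 : ℝ → ℂ) J := by exact contDiffOn_const
    have hum : ContDiffOn ℝ m u J := hu1.of_le le_self_add
    have hfm : ContDiffOn ℝ m f J := hf1.of_le le_self_add
    have hgm : ContDiffOn ℝ m g J := hg1.of_le le_self_add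
    have hfg1 : ContDiffOn ℝ ((m : WithTop ℕ∞) + 1) (f * g) J := hf1.mul hg1
    have hv : ContDiffOn ℝ m (derivWithin u J) J := hu1.derivWithin hJ le_rfl
    have hui1 : ContDiffOn ℝ ((m : WithTop ℕ∞) + 1) u⁻¹ J := hu1.inv hu0
    have huim : ContDiffOn ℝ m u⁻¹ J := hui1.of_le le_self_add
    have hgd : ContDiffOn ℝ m (derivWithin g J) J := hg1.derivWithin hJ le_rfl
    have h1d : ContDiffOn ℝ m (derivWithin (1 : ℝ → ℂ) J) J := hone1.derivWithin hJ le_rfl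
    have hufd : ContDiffOn ℝ m (derivWithin (u * f) J) J := (hu1.mul hf1).derivWithin hJ le_rfl
    have hufgd : ContDiffOn ℝ m (derivWithin (u * (f * g)) J) J :=
      (hu1.mul hfg1).derivWithin hJ le_rfl
    have huig : ContDiffOn ℝ m (u⁻¹ * g) J := huim.mul hgm
    have hui1m : ContDiffOn ℝ m (u⁻¹ * (1 : ℝ → ℂ)) J := huim.mul hone_m
    have e1 := PhiRec hJ hu0 m hu1 hf1 hg1 ht
    have e2 := PhiRec (f := f * g) (g := (1 : ℝ → ℂ)) hJ hu0 m hu1 hfg1 hone1 ht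
    have p1 := PsiRec (g := g) hJ m hu1 hf1 ht
    have p2 := PsiRec (f := f * g) (g := (1 : ℝ → ℂ)) hJ m hu1 hfg1 ht
    have iPhi1 := (ih hum f (derivWithin g J) hfm hgd ht).1
    have iPhi2 := (ih hum (derivWithin (u * f) J) (u⁻¹ * g) hufd huig ht).1
    have iPhi3 := (ih hum (derivWithin (u * (f * g)) J) (u⁻¹ * 1) hufgd hui1m ht).1
    have iPhi4 := (ih hum (f * g) (derivWithin (1 : ℝ → ℂ) J) (hfm.mul hgm) h1d ht).1
    have iPsi1 := (ih hum (derivWithin u J * f) (u⁻¹ * g) (hv.mul hfm) huig ht).2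
    have iPsi2 := (ih hum f (derivWithin u J * u⁻¹ * g) hfm ((hv.mul huim).mul hgm) ht).2
    have iPsi3 := (ih hum (derivWithin u J * (f * g)) (u⁻¹ * 1)
      (hv.mul (hfm.mul hgm)) hui1m ht).2
    have iPsi4 := (ih hum (f * g) (derivWithin u J * u⁻¹ * 1) (hfm.mul hgm)
      ((hv.mul huim).mul hone_m) ht).2
    have s1 := Th_split hJ hu0 m hu1 hfm hgm ht
    have s2 := Th_split (f := f * g) (g := (1 : ℝ → ℂ)) hJ hu0 m hu1 (hfm.mul hgm) hone_m ht
    have s3 := Th_split2 hJ hu0 m hu1 hf1 hg1 ht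
    have ms := PhiMulSplit hJ hu0 m hu1 hf1 hg1 ht
    have z4 : Phi J u m ((f * g) * derivWithin (1 : ℝ → ℂ) J) 1 t = 0 := by
      refine Phi_zero hJ m ht (fun y hy => ?_)
      have hc : derivWithin (1 : ℝ → ℂ) J y = 0 := by
        rw [show (1 : ℝ → ℂ) = fun _ => (1:ℂ) from rfl]
        have hh : HasDerivWithinAt (fun _ : ℝ => (1:ℂ)) 0 J y := hasDerivWithinAt_const _ _ _
        exact hh.derivWithin (hJ.uniqueDiffWithinAt hy)
      simp [Pi.mul_apply, hc]
    have r1 : ((derivWithin u J * f) * (u⁻¹ * g) : ℝ → ℂ) =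
        f * (derivWithin u J * u⁻¹ * g) := by ring
    have r2 : ((derivWithin u J * (f * g)) * (u⁻¹ * 1) : ℝ → ℂ) =
        f * (derivWithin u J * u⁻¹ * g) := by ring
    have r3 : ((f * g) * (derivWithin u J * u⁻¹ * 1) : ℝ → ℂ) =
        f * (derivWithin u J * u⁻¹ * g) := by ring
    have r4 : ((f * g) * (derivWithin (derivWithin u J) J * u⁻¹ * 1) : ℝ → ℂ) =
        f * (derivWithin (derivWithin u J) J * u⁻¹ * g) := by ring
    rw [r1] at iPsi1
    rw [r2] at iPsi3
    rw [r3] at iPsi4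
    rw [r4] at s2
    have hW : Th J u (m+1) (f * derivWithin g J) t =
        ((m : ℂ) + 1) * (Th J u m (derivWithin u J * u⁻¹ * (f * derivWithin g J)) t -
          Phi J u m (f * derivWithin g J) 1 t) := by
      simp only [Th]
    constructor
    · linear_combination e1 - e2 + iPhi1 + iPhi2 - iPhi3 - iPhi4 + iPsi1 - iPsi2 - iPsi3 +
        iPsi4 - s1 + s2 - ms - z4
    · linear_combination p1 - p2 - hW +
        ((m : ℂ) + 1) * (iPhi2 - iPhi3 + iPsi1 - iPsi3 + s3 - ms)

end Stmt1Aux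

open Stmt1Aux in
theorem stmt1 (J : Set ℝ) (hJconn : J.OrdConnected) (hJuniq : UniqueDiffOn ℝ J)
    (n q : ℕ) (u : ℝ → ℂ) (hu : ContDiffOn ℝ n u J) (hu0 : ∀ t ∈ J, u t ≠ 0) :
    ∀ t ∈ J,
      (∑ p ∈ Finset.range (n + 1), (n.choose p : ℂ) *
        iteratedDerivWithin p (u ^ (p + q)) J t *
        iteratedDerivWithin (n - p) (u⁻¹ ^ (p + q)) J t) =
      ∑ p ∈ Finset.range (n + 1), (n.choose p : ℂ) *
        iteratedDerivWithin p (u ^ p) J t *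
        iteratedDerivWithin (n - p) (u⁻¹ ^ p) J t := by
  intro t ht
  have hq : ContDiffOn ℝ n (u ^ q) J := by exact hu.pow q
  have hiq : ContDiffOn ℝ n (u⁻¹ ^ q) J := by exact (hu.inv hu0).pow q
  have hPhi := (mainInd hJuniq hu0 n hu (u ^ q) (u⁻¹ ^ q) hq hiq ht).1
  have hE : Set.EqOn (u ^ q * u⁻¹ ^ q) (1 : ℝ → ℂ) J := by
    intro y hy
    simp only [Pi.mul_apply, Pi.pow_apply, Pi.inv_apply, Pi.one_apply]
    rw [← mul_pow, mul_inv_cancel₀ (hu0 y hy), one_pow]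
  have hc : Phi J u n (u ^ q * u⁻¹ ^ q) 1 t = Phi J u n 1 1 t :=
    Phi_congr hJuniq hE (fun y _ => rfl) n ht
  have h1 : (∑ p ∈ Finset.range (n + 1), (n.choose p : ℂ) *
      iteratedDerivWithin p (u ^ (p + q)) J t *
      iteratedDerivWithin (n - p) (u⁻¹ ^ (p + q)) J t) = Phi J u n (u ^ q) (u⁻¹ ^ q) t :=
    Finset.sum_congr rfl fun p _ => by rw [pow_add, pow_add]
  have h2 : Phi J u n 1 1 t = ∑ p ∈ Finset.range (n + 1), (n.choose p : ℂ) *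
      iteratedDerivWithin p (u ^ p) J t *
      iteratedDerivWithin (n - p) (u⁻¹ ^ p) J t :=
    Finset.sum_congr rfl fun p _ => by rw [mul_one, mul_one]
  exact h1.trans (hPhi.trans (hc.trans h2))
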